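/- Monotonicity of F_R: let q be a positive probability vector on Fin M, let a : Fin M → ℝ satisfy a i > 0 for all i, and let E be a real number. For ξ ≥ 0 set c i ξ = Real.exp ((Real.log (a i) + ξ * Real.log (q i)) / (1 + ξ)), S ξ = ∑ i, c i ξ, and F_R ξ = (1 / (1 + ξ)) * (∑ i, c i ξ * Real.log (a i / q i)) / S ξ − Real.log (S ξ) − E. Then F_R is monotone nonincreasing on the interval [0, ∞). -/
import Mathlib

open Real Finset

private lemma FR_sum_exp_pos {M : ℕ} (hM : 1 ≤ M) (w L : Fin M → ℝ) (hw : ∀ i, 0 < w i) (u : ℝ) :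
    0 < ∑ i, w i * Real.exp (u * L i) := by
  have : Nonempty (Fin M) := ⟨⟨0, hM⟩⟩
  exact Finset.sum_pos (fun i _ => mul_pos (hw i) (Real.exp_pos _)) Finset.univ_nonempty

/-- tangent inequality: `S s ≥ S t * exp ((s-t) * (T t / S t))`. -/
private lemma FR_tangent {M : ℕ} (hM : 1 ≤ M) (w L : Fin M → ℝ) (hw : ∀ i, 0 < w i) (s t : ℝ) :
    (∑ i, w i * Real.exp (t * L i)) *
      Real.exp ((s - t) * ((∑ i, w i * Real.exp (t * L i) * L i) /
        (∑ i, w i * Real.exp (t * L i)))) ≤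
    ∑ i, w i * Real.exp (s * L i) := by
  set S := ∑ i, w i * Real.exp (t * L i) with hS
  set T := ∑ i, w i * Real.exp (t * L i) * L i with hT
  have hSpos : 0 < S := FR_sum_exp_pos hM w L hw t
  set d := s - t with hd
  set m := d * (T / S) with hm
  have hmS : m * S = d * T := by
    rw [hm]; field_simp
  have hterm : ∀ i, w i * Real.exp (t * L i) * (Real.exp m * (1 + (d * L i - m)))
      ≤ w i * Real.exp (s * L i) := by
    intro i
    have h1 : Real.exp (s * L i) = Real.exp (t * L i) * (Real.exp m * Real.exp (d * L i - m)) := by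
      rw [← Real.exp_add, ← Real.exp_add]; congr 1; rw [hd]; ring
    rw [h1]
    have h3 : (1 : ℝ) + (d * L i - m) ≤ Real.exp (d * L i - m) := by
      have := Real.add_one_le_exp (d * L i - m); linarith
    have hpos : 0 ≤ w i * Real.exp (t * L i) * Real.exp m :=
      le_of_lt (mul_pos (mul_pos (hw i) (Real.exp_pos _)) (Real.exp_pos _))
    nlinarith [mul_le_mul_of_nonneg_left h3 hpos]
  have hsum : ∑ i, w i * Real.exp (t * L i) * (Real.exp m * (1 + (d * L i - m)))
      ≤ ∑ i, w i * Real.exp (s * L i) := Finset.sum_le_sum (fun i _ => hterm i)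
  have hid : ∑ i, w i * Real.exp (t * L i) * (Real.exp m * (1 + (d * L i - m)))
      = Real.exp m * ((1 - m) * S + d * T) := by
    have : ∀ i, w i * Real.exp (t * L i) * (Real.exp m * (1 + (d * L i - m)))
        = Real.exp m * ((1 - m) * (w i * Real.exp (t * L i))
            + d * (w i * Real.exp (t * L i) * L i)) := by
      intro i; ring
    rw [Finset.sum_congr rfl (fun i _ => this i)]
    rw [← Finset.mul_sum, Finset.sum_add_distrib, ← Finset.mul_sum, ← Finset.mul_sum]
  have hfin : Real.exp m * ((1 - m) * S + d * T) = S * Real.exp m := by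
    have : (1 - m) * S + d * T = S := by nlinarith [hmS]
    rw [this]; ring
  calc S * Real.exp m = ∑ i, w i * Real.exp (t * L i) * (Real.exp m * (1 + (d * L i - m))) := by
        rw [hid, hfin]
    _ ≤ ∑ i, w i * Real.exp (s * L i) := hsum

/-- Chebyshev-type inequality: for s ≤ t, `T s * S t ≤ T t * S s`. -/
private lemma FR_cheb {M : ℕ} (w L : Fin M → ℝ) (hw : ∀ i, 0 < w i) {s t : ℝ} (hst : s ≤ t) :
    (∑ i, w i * Real.exp (s * L i) * L i) * (∑ i, w i * Real.exp (t * L i)) ≤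
    (∑ i, w i * Real.exp (t * L i) * L i) * (∑ i, w i * Real.exp (s * L i)) := by
  set g : Fin M → Fin M → ℝ := fun i j =>
    w i * w j * (L i - L j) *
      (Real.exp (t * L i) * Real.exp (s * L j) - Real.exp (s * L i) * Real.exp (t * L j))
    with hg
  have hgnn : ∀ i j, 0 ≤ g i j := by
    intro i j
    have hw2 : 0 ≤ w i * w j := le_of_lt (mul_pos (hw i) (hw j))
    rcases le_total (L j) (L i) with h | h
    · have hexp : Real.exp (s * L i) * Real.exp (t * L j)
          ≤ Real.exp (t * L i) * Real.exp (s * L j) := by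
        rw [← Real.exp_add, ← Real.exp_add]
        exact Real.exp_le_exp.2 (by nlinarith)
      have : 0 ≤ (L i - L j) := by linarith
      have := mul_nonneg this (by linarith : (0:ℝ) ≤ Real.exp (t * L i) * Real.exp (s * L j) - Real.exp (s * L i) * Real.exp (t * L j))
      calc (0:ℝ) ≤ (w i * w j) * ((L i - L j) * (Real.exp (t * L i) * Real.exp (s * L j) - Real.exp (s * L i) * Real.exp (t * L j))) := mul_nonneg hw2 this
        _ = g i j := by rw [hg]; ring
    · have hexp : Real.exp (t * L i) * Real.exp (s * L j)
          ≤ Real.exp (s * L i) * Real.exp (t * L j) := by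
        rw [← Real.exp_add, ← Real.exp_add]
        exact Real.exp_le_exp.2 (by nlinarith)
      have h1 : L i - L j ≤ 0 := by linarith
      have h2 : Real.exp (t * L i) * Real.exp (s * L j) - Real.exp (s * L i) * Real.exp (t * L j) ≤ 0 := by linarith
      have : 0 ≤ (L i - L j) * (Real.exp (t * L i) * Real.exp (s * L j) - Real.exp (s * L i) * Real.exp (t * L j)) := by nlinarith
      calc (0:ℝ) ≤ (w i * w j) * ((L i - L j) * (Real.exp (t * L i) * Real.exp (s * L j) - Real.exp (s * L i) * Real.exp (t * L j))) := mul_nonneg hw2 this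
        _ = g i j := by rw [hg]; ring
  set St := ∑ i, w i * Real.exp (t * L i) with hSt
  set Ss := ∑ i, w i * Real.exp (s * L i) with hSs
  set Tt := ∑ i, w i * Real.exp (t * L i) * L i with hTt
  set Ts := ∑ i, w i * Real.exp (s * L i) * L i with hTs
  have hrow : ∀ i, ∑ j, g i j =
      (w i * Real.exp (t * L i) * L i) * Ss + (w i * Real.exp (s * L i)) * Tt
        - (w i * Real.exp (s * L i) * L i) * St - (w i * Real.exp (t * L i)) * Ts := by
    intro i
    have : ∀ j, g i j =
        (w i * Real.exp (t * L i) * L i) * (w j * Real.exp (s * L j))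
          + (w i * Real.exp (s * L i)) * (w j * Real.exp (t * L j) * L j)
          - (w i * Real.exp (s * L i) * L i) * (w j * Real.exp (t * L j))
          - (w i * Real.exp (t * L i)) * (w j * Real.exp (s * L j) * L j) := by
      intro j; rw [hg]; ring
    rw [Finset.sum_congr rfl (fun j _ => this j)]
    rw [Finset.sum_sub_distrib, Finset.sum_sub_distrib, Finset.sum_add_distrib,
      ← Finset.mul_sum, ← Finset.mul_sum, ← Finset.mul_sum, ← Finset.mul_sum]
  have htotal : ∑ i, ∑ j, g i j = 2 * (Tt * Ss) - 2 * (Ts * St) := by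
    rw [Finset.sum_congr rfl (fun i _ => hrow i)]
    rw [Finset.sum_sub_distrib, Finset.sum_sub_distrib, Finset.sum_add_distrib,
      ← Finset.sum_mul, ← Finset.sum_mul, ← Finset.sum_mul, ← Finset.sum_mul]
    rw [← hTt, ← hSs, ← hTs, ← hSt]
    ring
  have : 0 ≤ ∑ i, ∑ j, g i j :=
    Finset.sum_nonneg fun i _ => Finset.sum_nonneg fun j _ => hgnn i j
  linarith [htotal ▸ this]

theorem F_R_antitone (M : ℕ) (hM : 1 ≤ M)
    (q : Fin M → ℝ) (hq : ∀ i, 0 < q i) (hq1 : ∑ i, q i = 1)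
    (a : Fin M → ℝ) (ha : ∀ i, 0 < a i)
    (E : ℝ) :
    AntitoneOn (fun ξ : ℝ =>
      (1 / (1 + ξ)) *
          (∑ i, Real.exp ((Real.log (a i) + ξ * Real.log (q i)) / (1 + ξ)) *
            Real.log (a i / q i)) /
          (∑ i, Real.exp ((Real.log (a i) + ξ * Real.log (q i)) / (1 + ξ))) -
        Real.log (∑ i, Real.exp ((Real.log (a i) + ξ * Real.log (q i)) / (1 + ξ))) - E)
      (Set.Ici (0 : ℝ)) := by
  set L : Fin M → ℝ := fun i => Real.log (a i) - Real.log (q i) with hL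
  set S : ℝ → ℝ := fun u => ∑ i, q i * Real.exp (u * L i) with hSdef
  set T : ℝ → ℝ := fun u => ∑ i, q i * Real.exp (u * L i) * L i with hTdef
  set G : ℝ → ℝ := fun u => u * T u / S u - Real.log (S u) with hGdef
  have hSpos : ∀ u, 0 < S u := fun u => FR_sum_exp_pos hM q L hq u
  -- rewrite F ξ = G (1/(1+ξ)) - E
  have hrew : ∀ ξ : ℝ, 0 ≤ ξ →
      ((1 / (1 + ξ)) *
          (∑ i, Real.exp ((Real.log (a i) + ξ * Real.log (q i)) / (1 + ξ)) *
            Real.log (a i / q i)) /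
          (∑ i, Real.exp ((Real.log (a i) + ξ * Real.log (q i)) / (1 + ξ))) -
        Real.log (∑ i, Real.exp ((Real.log (a i) + ξ * Real.log (q i)) / (1 + ξ))) - E)
      = G (1 / (1 + ξ)) - E := by
    intro ξ hξ
    have h1 : (0:ℝ) < 1 + ξ := by linarith
    have hc : ∀ i, Real.exp ((Real.log (a i) + ξ * Real.log (q i)) / (1 + ξ))
        = q i * Real.exp ((1 / (1 + ξ)) * L i) := by
      intro i
      rw [hL]
      conv_rhs => rw [← Real.exp_log (hq i), ← Real.exp_add]
      congr 1
      field_simp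
      ring
    have hlog : ∀ i, Real.log (a i / q i) = L i := by
      intro i; rw [hL]; exact Real.log_div (ha i).ne' (hq i).ne'
    have hS : (∑ i, Real.exp ((Real.log (a i) + ξ * Real.log (q i)) / (1 + ξ)))
        = S (1 / (1 + ξ)) := by
      rw [hSdef]; exact Finset.sum_congr rfl fun i _ => hc i
    have hT : (∑ i, Real.exp ((Real.log (a i) + ξ * Real.log (q i)) / (1 + ξ)) *
          Real.log (a i / q i)) = T (1 / (1 + ξ)) := by
      rw [hTdef]
      exact Finset.sum_congr rfl fun i _ => by rw [hc i, hlog i]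
    rw [hS, hT, hGdef]
  -- G is monotone on (0,1]
  have hGmono : ∀ s t : ℝ, 0 < s → s ≤ t → G s ≤ G t := by
    intro s t hs hst
    have hSs := hSpos s
    have hSt := hSpos t
    -- tangent at t evaluated at s : log (S s) ≥ log (S t) + (s - t) * (T t / S t)
    have htan := FR_tangent hM q L hq s t
    have hlog : Real.log (S t) + (s - t) * (T t / S t) ≤ Real.log (S s) := by
      have h1 : Real.log (S t * Real.exp ((s - t) * (T t / S t))) ≤ Real.log (S s) :=
        Real.log_le_log (mul_pos hSt (Real.exp_pos _)) htan
      rwa [Real.log_mul hSt.ne' (Real.exp_pos _).ne', Real.log_exp] at h1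
    have hcheb := FR_cheb q L hq hst
    have hdiv : T s / S s ≤ T t / S t := by
      rw [div_le_div_iff₀ hSs hSt]
      exact hcheb
    have hGs : G s = s * (T s / S s) - Real.log (S s) := by rw [hGdef]; ring
    have hGt : G t = t * (T t / S t) - Real.log (S t) := by rw [hGdef]; ring
    rw [hGs, hGt]
    nlinarith [hdiv, hlog, hs]
  intro x hx y hy hxy
  simp only [Set.mem_Ici] at hx hy
  dsimp only
  rw [hrew x hx, hrew y hy]
  have h1x : (0:ℝ) < 1 + x := by linarith
  have h1y : (0:ℝ) < 1 + y := by linarith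
  have hsle : 1 / (1 + y) ≤ 1 / (1 + x) := by
    apply one_div_le_one_div_of_le h1x; linarith
  have hspos : 0 < 1 / (1 + y) := by positivity
  have := hGmono (1 / (1 + y)) (1 / (1 + x)) hspos hsle
  linarith
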